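/- Let φ(ω) = exp(−ω²σ²/2) be the characteristic function of a zero-mean Gaussian with variance σ²>0, and θ>0. Define D(ω) = 2 φ(ω)² (1-cos(ωθ)) / (1-φ(ω)²). Then sup_{ω>0} D(ω) = θ²/σ², and lim_{ω→0⁺} D(ω) = θ²/σ². -/

import Mathlib

open Real Set

theorem stmt2 (σ θ : ℝ) (hσ : 0 < σ) (hθ : 0 < θ)
    (φ : ℝ → ℝ) (hφ : ∀ ω, φ ω = Real.exp (-(ω^2 * σ^2) / 2))
    (D : ℝ → ℝ)
    (hD : ∀ ω, D ω = 2 * (φ ω)^2 * (1 - Real.cos (ω * θ)) / (1 - (φ ω)^2)) :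
    IsLUB (D '' Ioi 0) (θ^2 / σ^2) ∧
      Filter.Tendsto D (nhdsWithin 0 (Ioi 0)) (nhds (θ^2 / σ^2)) := by
  -- Rewrite D on Ioi 0 as 2 (1 - cos(ωθ)) / (exp(ω²σ²) - 1)
  have hx : ∀ ω : ℝ, 0 < ω → 0 < ω^2 * σ^2 := fun ω hω => by positivity
  have hkey : ∀ ω : ℝ, 0 < ω →
      D ω = 2 * (1 - Real.cos (ω * θ)) / (Real.exp (ω^2 * σ^2) - 1) := by
    intro ω hω
    have hx' := hx ω hω
    have hsq : (φ ω)^2 = Real.exp (-(ω^2 * σ^2)) := by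
      rw [hφ, ← Real.exp_nat_mul]
      ring_nf
    have he : Real.exp (-(ω^2 * σ^2)) = (Real.exp (ω^2 * σ^2))⁻¹ := Real.exp_neg _
    have hgt : 1 < Real.exp (ω^2 * σ^2) := by
      have := Real.add_one_le_exp (ω^2 * σ^2); linarith
    have hne : Real.exp (ω^2 * σ^2) - 1 ≠ 0 := by linarith
    have hene : Real.exp (ω^2 * σ^2) ≠ 0 := (Real.exp_pos _).ne'
    rw [hD, hsq, he]
    field_simp
  -- 1 - cos t = 2 sin(t/2)^2
  have hcos : ∀ t : ℝ, 1 - Real.cos t = 2 * Real.sin (t/2)^2 := by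
    intro t
    have h1 : Real.cos (2 * (t/2)) = 2 * Real.cos (t/2)^2 - 1 := Real.cos_two_mul _
    have h2 : Real.sin (t/2)^2 + Real.cos (t/2)^2 = 1 := Real.sin_sq_add_cos_sq _
    have : (2 : ℝ) * (t/2) = t := by ring
    rw [this] at h1
    nlinarith
  -- upper bound
  have hub : ∀ ω : ℝ, 0 < ω → D ω ≤ θ^2 / σ^2 := by
    intro ω hω
    have hx' := hx ω hω
    rw [hkey ω hω]
    have hc : 1 - Real.cos (ω * θ) ≤ (ω * θ)^2 / 2 := by
      rw [hcos]
      have hs : Real.sin (ω * θ / 2)^2 ≤ (ω * θ / 2)^2 := by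
        have := Real.abs_sin_le_abs (x := ω * θ / 2)
        calc Real.sin (ω * θ / 2)^2 = |Real.sin (ω * θ / 2)|^2 := (sq_abs _).symm
          _ ≤ |ω * θ / 2|^2 := pow_le_pow_left₀ (abs_nonneg _) this 2
          _ = (ω * θ / 2)^2 := sq_abs _
      nlinarith
    have hden : ω^2 * σ^2 ≤ Real.exp (ω^2 * σ^2) - 1 := by
      have := Real.add_one_le_exp (ω^2 * σ^2); linarith
    have hden0 : (0:ℝ) < Real.exp (ω^2 * σ^2) - 1 := lt_of_lt_of_le hx' hden
    have hnum : 2 * (1 - Real.cos (ω * θ)) ≤ (ω * θ)^2 := by linarith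
    calc 2 * (1 - Real.cos (ω * θ)) / (Real.exp (ω^2 * σ^2) - 1)
        ≤ (ω * θ)^2 / (ω^2 * σ^2) := by
          apply div_le_div₀ (by positivity) hnum hx' hden
      _ = θ^2 / σ^2 := by
          field_simp
  -- the limit
  have hlim : Filter.Tendsto D (nhdsWithin 0 (Ioi 0)) (nhds (θ^2 / σ^2)) := by
    -- sin u / u → 1
    have hsin : Filter.Tendsto (fun u : ℝ => Real.sin u / u) (nhdsWithin 0 {x | x ≠ 0}) (nhds 1) := by
      have h := (Real.hasDerivAt_sin 0)
      rw [hasDerivAt_iff_tendsto_slope] at h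
      simp only [Real.cos_zero] at h
      refine h.congr (fun x => ?_)
      simp [slope, div_eq_mul_inv, mul_comm]
    -- (exp x - 1)/x → 1
    have hexp : Filter.Tendsto (fun x : ℝ => (Real.exp x - 1) / x) (nhdsWithin 0 {x | x ≠ 0}) (nhds 1) := by
      have h := (Real.hasDerivAt_exp 0)
      rw [hasDerivAt_iff_tendsto_slope] at h
      simp only [Real.exp_zero] at h
      refine h.congr (fun x => ?_)
      simp [slope, div_eq_mul_inv, mul_comm]
    -- x/(exp x - 1) → 1
    have hexp' : Filter.Tendsto (fun x : ℝ => x / (Real.exp x - 1)) (nhdsWithin 0 {x | x ≠ 0}) (nhds 1) := by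
      have := (hexp.inv₀ one_ne_zero)
      simp only [inv_one] at this
      refine this.congr (fun x => ?_)
      rw [inv_div]
    -- ω ↦ ωθ/2 maps 𝓝[>]0 into 𝓝[≠]0
    have hmap1 : Filter.Tendsto (fun ω : ℝ => ω * θ / 2) (nhdsWithin 0 (Ioi 0)) (nhdsWithin 0 {x | x ≠ 0}) := by
      rw [tendsto_nhdsWithin_iff]
      constructor
      · have : Filter.Tendsto (fun ω : ℝ => ω * θ / 2) (nhds 0) (nhds (0 * θ / 2)) := by
          exact ((continuous_id.mul continuous_const).div_const 2).tendsto 0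
        simpa using this.mono_left nhdsWithin_le_nhds
      · filter_upwards [self_mem_nhdsWithin] with ω (hω : 0 < ω)
        have : 0 < ω * θ / 2 := by positivity
        exact this.ne'
    have hmap2 : Filter.Tendsto (fun ω : ℝ => ω^2 * σ^2) (nhdsWithin 0 (Ioi 0)) (nhdsWithin 0 {x | x ≠ 0}) := by
      rw [tendsto_nhdsWithin_iff]
      constructor
      · have : Filter.Tendsto (fun ω : ℝ => ω^2 * σ^2) (nhds 0) (nhds (0^2 * σ^2)) := by
          exact ((continuous_id.pow 2).mul continuous_const).tendsto 0
        simpa using this.mono_left nhdsWithin_le_nhds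
      · filter_upwards [self_mem_nhdsWithin] with ω (hω : 0 < ω)
        exact (hx ω hω).ne'
    -- the product form tends to the limit
    have hprod : Filter.Tendsto
        (fun ω : ℝ => (Real.sin (ω * θ / 2) / (ω * θ / 2))^2 *
          ((ω^2 * σ^2) / (Real.exp (ω^2 * σ^2) - 1)) * (θ^2 / σ^2))
        (nhdsWithin 0 (Ioi 0)) (nhds (θ^2 / σ^2)) := by
      have h1 := (hsin.comp hmap1).pow 2
      have h2 := hexp'.comp hmap2
      have := (h1.mul h2).mul_const (θ^2 / σ^2)
      simpa using this
    refine hprod.congr' ?_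
    filter_upwards [self_mem_nhdsWithin] with ω (hω : 0 < ω)
    rw [hkey ω hω, hcos]
    have hu : ω * θ / 2 ≠ 0 := by positivity
    have hx' := hx ω hω
    have hgt : 1 < Real.exp (ω^2 * σ^2) := by
      have := Real.add_one_le_exp (ω^2 * σ^2); linarith
    have hne : Real.exp (ω^2 * σ^2) - 1 ≠ 0 := by linarith
    field_simp
  refine ⟨⟨?_, ?_⟩, hlim⟩
  · rintro y ⟨ω, hω, rfl⟩
    exact hub ω hω
  · intro b hb
    refine le_of_tendsto hlim ?_
    filter_upwards [self_mem_nhdsWithin] with ω (hω : 0 < ω)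
    exact hb ⟨ω, hω, rfl⟩
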